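/- Let m>1, q∈(0,1), σ>0, N≥1, and let f∈C¹([0,ξ₀]) be nonnegative and decreasing with f>0 on [0,ξ₀), f(ξ₀)=0, (f^m)'(ξ₀)=0, satisfying m ξ^{N-1} f^{m-1-q}(ξ)|f'(ξ)| + β ξ^N f^{1-q}(ξ) ≤ ξ₀^{N+σ-1}(ξ₀−ξ) for all ξ∈(0,ξ₀) with β>0. Then there exist constants C₁,C₂>0 (depending only on m,N,q,σ,β,ξ₀) such that f(ξ) ≤ C₁(ξ₀−ξ)^{2/(m-q)} and f(ξ) ≤ C₂(ξ₀−ξ)^{1/(1-q)} for all ξ∈(ξ₀/2,ξ₀). -/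

import Mathlib

theorem interface_upper_bounds (m q σ β ξ₀ : ℝ) (N : ℕ)
    (hm : 1 < m) (hq0 : 0 < q) (hq1 : q < 1) (hσ : 0 < σ) (hβ : 0 < β)
    (hN : 1 ≤ N) (hξ₀ : 0 < ξ₀)
    (f : ℝ → ℝ)
    (hreg : ContDiffOn ℝ 1 f (Set.Icc 0 ξ₀))
    (hnonneg : ∀ ξ ∈ Set.Icc 0 ξ₀, 0 ≤ f ξ)
    (hdec : StrictAntiOn f (Set.Icc 0 ξ₀))
    (hpos : ∀ ξ ∈ Set.Ico 0 ξ₀, 0 < f ξ)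
    (hzero : f ξ₀ = 0)
    (hderzero : deriv (fun s => f s ^ m) ξ₀ = 0)
    (hineq : ∀ ξ ∈ Set.Ioo 0 ξ₀,
      m * ξ ^ ((N : ℝ) - 1) * f ξ ^ (m - 1 - q) * |deriv f ξ| + β * ξ ^ (N : ℝ) * f ξ ^ (1 - q)
        ≤ ξ₀ ^ ((N : ℝ) + σ - 1) * (ξ₀ - ξ)) :
    ∃ C₁ > (0:ℝ), ∃ C₂ > (0:ℝ), ∀ ξ ∈ Set.Ioo (ξ₀ / 2) ξ₀,
      f ξ ≤ C₁ * (ξ₀ - ξ) ^ (2 / (m - q)) ∧ f ξ ≤ C₂ * (ξ₀ - ξ) ^ (1 / (1 - q)) := by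
  have hmq : 0 < m - q := by linarith
  have h1q : 0 < 1 - q := by linarith
  have hξ2 : (0:ℝ) < ξ₀ / 2 := by linarith
  have hN1 : (0:ℝ) ≤ (N : ℝ) - 1 := by
    have : (1:ℝ) ≤ (N:ℝ) := by exact_mod_cast hN
    linarith
  set A : ℝ := ξ₀ ^ ((N:ℝ) + σ - 1) / ((ξ₀/2) ^ ((N:ℝ) - 1)) with hAdef
  set B : ℝ := ξ₀ ^ ((N:ℝ) + σ - 1) / (β * (ξ₀/2) ^ (N:ℝ)) with hBdef
  have hApos : 0 < A := div_pos (Real.rpow_pos_of_pos hξ₀ _) (Real.rpow_pos_of_pos hξ2 _)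
  have hBpos : 0 < B :=
    div_pos (Real.rpow_pos_of_pos hξ₀ _) (mul_pos hβ (Real.rpow_pos_of_pos hξ2 _))
  -- key pointwise bound on the first term
  have key1 : ∀ c ∈ Set.Ioo (ξ₀/2) ξ₀,
      (m - q) * (f c ^ (m - 1 - q) * |deriv f c|) ≤ A * (ξ₀ - c) := by
    intro c hc
    have hc0 : 0 < c := lt_trans hξ2 hc.1
    have h := hineq c ⟨hc0, hc.2⟩
    have hX : 0 ≤ f c ^ (m - 1 - q) * |deriv f c| :=
      mul_nonneg (Real.rpow_nonneg (hnonneg c ⟨hc0.le, hc.2.le⟩) _) (abs_nonneg _)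
    have hβterm : 0 ≤ β * c ^ (N:ℝ) * f c ^ (1 - q) :=
      mul_nonneg (mul_nonneg hβ.le (Real.rpow_nonneg hc0.le _))
        (Real.rpow_nonneg (hnonneg c ⟨hc0.le, hc.2.le⟩) _)
    have hcN : (ξ₀/2) ^ ((N:ℝ) - 1) ≤ c ^ ((N:ℝ) - 1) :=
      Real.rpow_le_rpow hξ2.le hc.1.le hN1
    have h1 : m * (ξ₀/2) ^ ((N:ℝ) - 1) * (f c ^ (m - 1 - q) * |deriv f c|)
        ≤ ξ₀ ^ ((N:ℝ) + σ - 1) * (ξ₀ - c) := by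
      have hdrop : m * c ^ ((N:ℝ) - 1) * f c ^ (m - 1 - q) * |deriv f c|
          ≤ ξ₀ ^ ((N:ℝ) + σ - 1) * (ξ₀ - c) := by linarith
      have hmul : (ξ₀/2) ^ ((N:ℝ)-1) * (f c ^ (m-1-q) * |deriv f c|)
          ≤ c ^ ((N:ℝ)-1) * (f c ^ (m-1-q) * |deriv f c|) :=
        mul_le_mul_of_nonneg_right hcN hX
      have hm0 : (0:ℝ) ≤ m := by linarith
      calc m * (ξ₀/2) ^ ((N:ℝ) - 1) * (f c ^ (m - 1 - q) * |deriv f c|)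
          = m * ((ξ₀/2) ^ ((N:ℝ)-1) * (f c ^ (m-1-q) * |deriv f c|)) := by ring
        _ ≤ m * (c ^ ((N:ℝ)-1) * (f c ^ (m-1-q) * |deriv f c|)) :=
            mul_le_mul_of_nonneg_left hmul hm0
        _ = m * c ^ ((N:ℝ) - 1) * f c ^ (m - 1 - q) * |deriv f c| := by ring
        _ ≤ ξ₀ ^ ((N:ℝ) + σ - 1) * (ξ₀ - c) := hdrop
    have h2 : (m - q) * (f c ^ (m - 1 - q) * |deriv f c|)
        ≤ m * (f c ^ (m - 1 - q) * |deriv f c|) := by nlinarith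
    have hpow : 0 < (ξ₀/2) ^ ((N:ℝ) - 1) := Real.rpow_pos_of_pos hξ2 _
    rw [hAdef, div_mul_eq_mul_div, le_div_iff₀ hpow]
    calc (m - q) * (f c ^ (m - 1 - q) * |deriv f c|) * (ξ₀/2) ^ ((N:ℝ) - 1)
        ≤ m * (ξ₀/2) ^ ((N:ℝ) - 1) * (f c ^ (m - 1 - q) * |deriv f c|) := by nlinarith
      _ ≤ ξ₀ ^ ((N:ℝ) + σ - 1) * (ξ₀ - c) := h1
  refine ⟨A ^ (m-q)⁻¹, Real.rpow_pos_of_pos hApos _,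
    B ^ (1-q)⁻¹, Real.rpow_pos_of_pos hBpos _, ?_⟩
  intro ξ hξ
  have hξ0 : 0 < ξ := lt_trans hξ2 hξ.1
  have hξmem : ξ ∈ Set.Icc (0:ℝ) ξ₀ := ⟨hξ0.le, hξ.2.le⟩
  have hfnn : 0 ≤ f ξ := hnonneg ξ hξmem
  have hgap : 0 < ξ₀ - ξ := by linarith [hξ.2]
  constructor
  · -- first bound via MVT for g = f ^ (m - q)
    set g : ℝ → ℝ := fun s => f s ^ (m - q) with hgdef
    have hsub : Set.Icc ξ ξ₀ ⊆ Set.Icc 0 ξ₀ := Set.Icc_subset_Icc hξ0.le le_rfl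
    have hgc : ContinuousOn g (Set.Icc ξ ξ₀) := by
      intro x hx
      exact (Real.continuousAt_rpow_const (f x) (m - q)
        (Or.inr hmq.le)).comp_continuousWithinAt
        ((hreg.continuousOn.mono hsub) x hx)
    have hderivg : ∀ c ∈ Set.Ioo ξ ξ₀,
        HasDerivAt g (deriv f c * (m - q) * f c ^ (m - q - 1)) c := by
      intro c hc
      have hc0 : 0 < c := lt_trans hξ0 hc.1
      have hfc : DifferentiableAt ℝ f c :=
        ((hreg.differentiableOn one_ne_zero) c ⟨hc0.le, hc.2.le⟩).differentiableAt
          (Icc_mem_nhds hc0 hc.2)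
      have hfcpos : 0 < f c := hpos c ⟨hc0.le, hc.2⟩
      exact hfc.hasDerivAt.rpow_const (Or.inl hfcpos.ne')
    have hgd : DifferentiableOn ℝ g (Set.Ioo ξ ξ₀) := fun c hc =>
      ((hderivg c hc).differentiableAt).differentiableWithinAt
    obtain ⟨c, hc, hslope⟩ := exists_deriv_eq_slope g hξ.2 hgc hgd
    have hgξ₀ : g ξ₀ = 0 := by
      simp [hgdef, hzero, Real.zero_rpow hmq.ne']
    have hderivgc : deriv g c = deriv f c * (m - q) * f c ^ (m - q - 1) :=
      (hderivg c hc).deriv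
    have hcmem : c ∈ Set.Ioo (ξ₀/2) ξ₀ := ⟨lt_trans hξ.1 hc.1, hc.2⟩
    have hfcnn : 0 ≤ f c := hnonneg c ⟨(lt_trans hξ0 hc.1).le, hc.2.le⟩
    have habs : |deriv g c| ≤ A * (ξ₀ - c) := by
      rw [hderivgc]
      have : |deriv f c * (m - q) * f c ^ (m - q - 1)|
          = (m - q) * (f c ^ (m - 1 - q) * |deriv f c|) := by
        rw [abs_mul, abs_mul, abs_of_nonneg (Real.rpow_nonneg hfcnn _),
          abs_of_pos hmq]
        have : m - q - 1 = m - 1 - q := by ring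
        rw [this]; ring
      rw [this]
      exact key1 c hcmem
    have hgξ : g ξ ≤ A * (ξ₀ - ξ) ^ (2:ℝ) := by
      have hslope' : g ξ = -(deriv g c) * (ξ₀ - ξ) := by
        have := hslope
        rw [hgξ₀] at this
        field_simp at this
        linarith [this]
      rw [hslope']
      have h1 : -(deriv g c) ≤ |deriv g c| := neg_le_abs _
      have h2 : |deriv g c| ≤ A * (ξ₀ - ξ) := by
        calc |deriv g c| ≤ A * (ξ₀ - c) := habs
          _ ≤ A * (ξ₀ - ξ) := by nlinarith [hc.1, hApos]
      have : -(deriv g c) * (ξ₀ - ξ) ≤ A * (ξ₀ - ξ) * (ξ₀ - ξ) := by nlinarith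
      calc -(deriv g c) * (ξ₀ - ξ) ≤ A * (ξ₀ - ξ) * (ξ₀ - ξ) := this
        _ = A * (ξ₀ - ξ) ^ (2:ℝ) := by
            rw [show ((2:ℝ)) = ((2:ℕ):ℝ) by norm_num, Real.rpow_natCast]; ring
    -- now convert to the bound on f ξ
    have hfeq : f ξ = g ξ ^ (m - q)⁻¹ := by
      rw [hgdef]
      exact (Real.rpow_rpow_inv hfnn hmq.ne').symm
    rw [hfeq]
    calc g ξ ^ (m - q)⁻¹ ≤ (A * (ξ₀ - ξ) ^ (2:ℝ)) ^ (m - q)⁻¹ :=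
          Real.rpow_le_rpow (Real.rpow_nonneg hfnn _) hgξ (inv_nonneg.mpr hmq.le)
      _ = A ^ (m - q)⁻¹ * ((ξ₀ - ξ) ^ (2:ℝ)) ^ (m - q)⁻¹ :=
          Real.mul_rpow hApos.le (Real.rpow_nonneg hgap.le _)
      _ = A ^ (m - q)⁻¹ * (ξ₀ - ξ) ^ (2 / (m - q)) := by
          rw [← Real.rpow_mul hgap.le, div_eq_mul_inv]
  · -- second bound
    have h := hineq ξ ⟨hξ0, hξ.2⟩
    have hterm1 : 0 ≤ m * ξ ^ ((N:ℝ) - 1) * f ξ ^ (m - 1 - q) * |deriv f ξ| :=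
      mul_nonneg (mul_nonneg (mul_nonneg (by linarith) (Real.rpow_nonneg hξ0.le _))
        (Real.rpow_nonneg hfnn _)) (abs_nonneg _)
    have hξN : (ξ₀/2) ^ (N:ℝ) ≤ ξ ^ (N:ℝ) :=
      Real.rpow_le_rpow hξ2.le hξ.1.le (by positivity)
    have hpowpos : 0 < (ξ₀/2) ^ (N:ℝ) := Real.rpow_pos_of_pos hξ2 _
    have hf1q : f ξ ^ (1 - q) ≤ B * (ξ₀ - ξ) := by
      have hfq : 0 ≤ f ξ ^ (1 - q) := Real.rpow_nonneg hfnn _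
      have h1 : β * (ξ₀/2) ^ (N:ℝ) * f ξ ^ (1 - q) ≤ ξ₀ ^ ((N:ℝ) + σ - 1) * (ξ₀ - ξ) := by
        have hmul : (ξ₀/2) ^ (N:ℝ) * f ξ ^ (1-q) ≤ ξ ^ (N:ℝ) * f ξ ^ (1-q) :=
          mul_le_mul_of_nonneg_right hξN hfq
        calc β * (ξ₀/2) ^ (N:ℝ) * f ξ ^ (1 - q)
            = β * ((ξ₀/2) ^ (N:ℝ) * f ξ ^ (1-q)) := by ring
          _ ≤ β * (ξ ^ (N:ℝ) * f ξ ^ (1-q)) := mul_le_mul_of_nonneg_left hmul hβ.le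
          _ = β * ξ ^ (N:ℝ) * f ξ ^ (1-q) := by ring
          _ ≤ ξ₀ ^ ((N:ℝ) + σ - 1) * (ξ₀ - ξ) := by linarith
      rw [hBdef, div_mul_eq_mul_div, le_div_iff₀ (mul_pos hβ hpowpos)]
      calc f ξ ^ (1 - q) * (β * (ξ₀/2) ^ (N:ℝ))
          = β * (ξ₀/2) ^ (N:ℝ) * f ξ ^ (1 - q) := by ring
        _ ≤ ξ₀ ^ ((N:ℝ) + σ - 1) * (ξ₀ - ξ) := h1
    have hfeq : f ξ = (f ξ ^ (1 - q)) ^ (1 - q)⁻¹ :=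
      (Real.rpow_rpow_inv hfnn h1q.ne').symm
    rw [hfeq]
    calc (f ξ ^ (1 - q)) ^ (1 - q)⁻¹ ≤ (B * (ξ₀ - ξ)) ^ (1 - q)⁻¹ :=
          Real.rpow_le_rpow (Real.rpow_nonneg hfnn _) hf1q (inv_nonneg.mpr h1q.le)
      _ = B ^ (1 - q)⁻¹ * (ξ₀ - ξ) ^ (1 - q)⁻¹ := Real.mul_rpow hBpos.le hgap.le
      _ = B ^ (1 - q)⁻¹ * (ξ₀ - ξ) ^ (1 / (1 - q)) := by rw [one_div]
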